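/- Let G be a finite group such that Out(G) is trivial and the exact sequence 1 → Z(G) → G → Inn(G) → 1 splits. Then for every finite group A and every action α : A → Aut(G), the semidirect product G ⋊_α A is isomorphic to the direct product G × A. -/

import Mathlib

/-- Let `G` be a finite group with `Out(G)` trivial (every automorphism is inner)
such that `1 → Z(G) → G → Inn(G) → 1` splits (the natural surjection
`G → G/Z(G) ≅ Inn(G)` has a group-theoretic section).  Then every semidirect
product `G ⋊[α] A` with `A` a finite group is isomorphic to `G × A`. -/
theorem semidirect_eq_direct_of_complete_like {G : Type*} [Group G] [Finite G]
    (hout : ∀ f : MulAut G, ∃ g : G, f = MulAut.conj g)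
    (hsplit : ∃ s : (G ⧸ Subgroup.center G) →* G,
      (QuotientGroup.mk' (Subgroup.center G)).comp s = MonoidHom.id _)
    {A : Type*} [Group A] [Finite A] (α : A →* MulAut G) :
    Nonempty ((G ⋊[α] A) ≃* G × A) := by
  classical
  obtain ⟨s, hs⟩ := hsplit
  -- conj g = conj h  ↔  mk g = mk h in G ⧸ center G
  have key : ∀ g h : G, MulAut.conj g = MulAut.conj h →
      (g : G ⧸ Subgroup.center G) = (h : G ⧸ Subgroup.center G) := by
    intro g h hgh
    rw [QuotientGroup.eq, Subgroup.mem_center_iff]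
    intro x
    have hx : g * x * g⁻¹ = h * x * h⁻¹ := by
      have := DFunLike.congr_fun hgh x
      simpa [MulAut.conj_apply] using this
    have : x * (g⁻¹ * h) = g⁻¹ * h * x := by
      have := congrArg (fun y => g⁻¹ * y * h) hx
      simpa [mul_assoc] using this
    simpa using this
  have key2 : ∀ g h : G, (g : G ⧸ Subgroup.center G) = (h : G ⧸ Subgroup.center G) →
      MulAut.conj g = MulAut.conj h := by
    intro g h hgh
    rw [QuotientGroup.eq, Subgroup.mem_center_iff] at hgh
    ext x
    simp only [MulAut.conj_apply]
    have hz : x * (g⁻¹ * h) = g⁻¹ * h * x := hgh x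
    calc g * x * g⁻¹ = g * (x * (g⁻¹ * h)) * h⁻¹ := by group
      _ = g * (g⁻¹ * h * x) * h⁻¹ := by rw [hz]
      _ = h * x * h⁻¹ := by group
  set c : A → G := fun a => Classical.choose (hout (α a)) with hcdef
  have hc : ∀ a, α a = MulAut.conj (c a) := fun a => Classical.choose_spec (hout (α a))
  have hq1 : ((c 1 : G) : G ⧸ Subgroup.center G) = ((1 : G) : G ⧸ Subgroup.center G) := by
    apply key
    rw [← hc, map_one, map_one]
  have hqmul : ∀ a b : A, ((c (a * b) : G) : G ⧸ Subgroup.center G) =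
      ((c a * c b : G) : G ⧸ Subgroup.center G) := by
    intro a b
    apply key
    rw [← hc, map_mul, hc a, hc b, map_mul]
  let q : A →* G ⧸ Subgroup.center G :=
    { toFun := fun a => ((c a : G) : G ⧸ Subgroup.center G)
      map_one' := by simpa using hq1
      map_mul' := fun a b => by simpa using hqmul a b }
  let φ : A →* G := s.comp q
  have hφ : ∀ a, α a = MulAut.conj (φ a) := by
    intro a
    rw [hc a]
    apply key2
    have := DFunLike.congr_fun hs (q a)
    exact this.symm
  refine ⟨{
    toFun := fun x => (x.left * φ x.right, x.right)
    invFun := fun p => ⟨p.1 * (φ p.2)⁻¹, p.2⟩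
    left_inv := by
      intro x
      ext <;> simp [mul_assoc]
    right_inv := by
      intro p
      ext <;> simp [mul_assoc]
    map_mul' := by
      intro x y
      ext
      · show x.left * (α x.right) y.left * φ (x.right * y.right) =
          (x.left * φ x.right) * (y.left * φ y.right)
        rw [hφ, MulAut.conj_apply, map_mul]
        group
      · rfl }⟩
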